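/- Let V: ℝ → ℝ ∪ {+∞} be a proper convex function, differentiable on (0,∞), with V'(α) → −∞ as α ↓ 0, and let P be a probability measure, η ≥ 0 a measurable function with P(η > 0) > 0, and Ψ a measurable function such that V(η) − ηΨ ∈ L¹(P). Then there exists α ∈ (0,1] with E_P[V(αη) − αηΨ] < V(0), i.e. the infimum over α ≥ 0 of α ↦ E_P[V(αη) − αηΨ] is not attained at α = 0. -/

import Mathlib

open MeasureTheory Filter Topology
open scoped ENNReal NNReal

theorem stmt_19 {Ω : Type*} [MeasurableSpace Ω]
    (Vr : ℝ → ℝ)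
    (hVconv : ConvexOn ℝ (Set.Ici 0) Vr)
    (hVdiff : DifferentiableOn ℝ Vr (Set.Ioi 0))
    (hV'0 : Tendsto (fun y => derivWithin Vr (Set.Ioi 0) y) (𝓝[>] 0) atBot)
    (P : Measure Ω) [IsProbabilityMeasure P]
    (η : Ω → ℝ) (hηmeas : Measurable η) (hηpos : ∀ ω, 0 ≤ η ω)
    (hηne : 0 < P {ω | 0 < η ω})
    (Ψ : Ω → ℝ) (hΨmeas : Measurable Ψ)
    (hG1 : Integrable (fun ω => Vr (η ω) - η ω * Ψ ω) P) :
    ∃ α ∈ Set.Ioc (0 : ℝ) 1,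
      (∫⁻ ω, ENNReal.ofReal (Vr (α * η ω) - α * η ω * Ψ ω) ∂P).toEReal
        - (∫⁻ ω, ENNReal.ofReal (-(Vr (α * η ω) - α * η ω * Ψ ω)) ∂P).toEReal
        < ((Vr 0 : ℝ) : EReal) := by
  classical
  set V0 : ℝ := Vr 0 with hV0def
  -- a measurable modification of Vr agreeing with Vr on `Ici 0`
  set W : ℝ → ℝ := (Set.Ioi (0:ℝ)).piecewise Vr (fun _ => V0) with hWdef
  have hWmeas : Measurable W :=
    ContinuousOn.measurable_piecewise hVdiff.continuousOn continuousOn_const measurableSet_Ioi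
  have hWeq : ∀ x : ℝ, 0 ≤ x → W x = Vr x := by
    intro x hx
    rcases hx.lt_or_eq with h | h
    · simp [hWdef, Set.piecewise, h]
    · simp [hWdef, Set.piecewise, ← h, hV0def]
  set S : Set Ω := {ω | 0 < η ω} with hSdef
  have hSmeas : MeasurableSet S := measurableSet_lt measurable_const hηmeas
  -- the difference quotient
  set F : ℝ → Ω → ℝ := fun a ω => (Vr (a * η ω) - a * η ω * Ψ ω - V0) / a with hFdef
  have hFmeas : ∀ a : ℝ, 0 < a → Measurable (F a) := by
    intro a ha
    have : F a = fun ω => (W (a * η ω) - a * η ω * Ψ ω - V0) / a := by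
      funext ω
      rw [hFdef]
      simp only
      rw [hWeq _ (mul_nonneg ha.le (hηpos ω))]
    rw [this]
    exact (((hWmeas.comp (measurable_const.mul hηmeas)).sub
      ((measurable_const.mul hηmeas).mul hΨmeas)).sub measurable_const).div_const a
  -- monotonicity of the difference quotient
  have hFmono : ∀ (ω : Ω) (a b : ℝ), 0 < a → a ≤ b → F a ω ≤ F b ω := by
    intro ω a b ha hab
    have hb : 0 < b := ha.trans_le hab
    set c : ℝ := η ω with hcdef
    have hc : 0 ≤ c := hηpos ω
    have key : Vr (a * c) ≤ (a/b) * Vr (b * c) + (1 - a/b) * V0 := by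
      have h1 : (a/b) • (b*c) + (1 - a/b) • (0:ℝ) = a * c := by
        rw [smul_eq_mul, smul_eq_mul, mul_zero, add_zero, div_mul_eq_mul_div, div_eq_iff hb.ne']
        ring
      have hmem1 : b * c ∈ Set.Ici (0:ℝ) := Set.mem_Ici.2 (mul_nonneg hb.le hc)
      have hmem2 : (0:ℝ) ∈ Set.Ici (0:ℝ) := Set.mem_Ici.2 le_rfl
      have hw1 : (0:ℝ) ≤ a / b := div_nonneg ha.le hb.le
      have hw2 : (0:ℝ) ≤ 1 - a / b := by
        rw [sub_nonneg]; exact (div_le_one hb).2 hab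
      have hsum : a/b + (1 - a/b) = 1 := by ring
      have h2 := hVconv.2 hmem1 hmem2 hw1 hw2 hsum
      rw [h1] at h2
      simpa [smul_eq_mul, hV0def] using h2
    have key2 : b * Vr (a*c) ≤ a * Vr (b*c) + (b - a) * V0 := by
      have h3 := mul_le_mul_of_nonneg_left key hb.le
      calc b * Vr (a*c) ≤ b * ((a/b) * Vr (b*c) + (1 - a/b) * V0) := h3
        _ = a * Vr (b*c) + (b - a) * V0 := by field_simp
    rw [hFdef]
    simp only
    rw [div_le_div_iff₀ ha hb]
    have hcomm : a * c * Ψ ω * b = b * c * Ψ ω * a := by ring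
    nlinarith [key2]
  -- divergence of the difference quotient on S
  have hFdiv : ∀ ω ∈ S, Tendsto (fun n : ℕ => F (1/((n:ℝ)+1)) ω) atTop atBot := by
    intro ω hω
    set c : ℝ := η ω with hcdef
    have hc : 0 < c := hω
    set D : ℝ → ℝ := fun y => derivWithin Vr (Set.Ioi 0) y with hDdef
    have hbound : ∀ a : ℝ, 0 < a → F a ω ≤ c * D (a*c) - c * Ψ ω := by
      intro a ha
      have hac : 0 < a * c := mul_pos ha hc
      have hdiffAt : DifferentiableAt ℝ Vr (a*c) :=
        (hVdiff (a*c) hac).differentiableAt (Ioi_mem_nhds hac)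
      have hslope : slope Vr 0 (a*c) ≤ derivWithin Vr (Set.Ici 0) (a*c) :=
        hVconv.slope_le_derivWithin (Set.mem_Ici.2 le_rfl) (Set.mem_Ici.2 hac.le) hac
          hdiffAt.differentiableWithinAt
      have hderiv_eq : derivWithin Vr (Set.Ici 0) (a*c) = D (a*c) := by
        rw [hDdef]
        simp only
        rw [derivWithin_of_mem_nhds (mem_nhds_iff.2 ⟨Set.Ioi 0, Set.Ioi_subset_Ici_self,
          isOpen_Ioi, hac⟩), derivWithin_of_isOpen isOpen_Ioi hac]
      have hslope' : (Vr (a*c) - V0) / (a*c) ≤ D (a*c) := by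
        have : slope Vr 0 (a*c) = (Vr (a*c) - V0) / (a*c) := by
          rw [slope_def_field]; rw [hV0def]; ring_nf
        rw [← this, ← hderiv_eq]; exact hslope
      have h4 : F a ω = c * ((Vr (a*c) - V0) / (a*c)) - c * Ψ ω := by
        rw [hFdef]
        simp only [← hcdef]
        field_simp
        ring
      rw [h4]
      have := mul_le_mul_of_nonneg_left hslope' hc.le
      linarith
    have h1 : Tendsto (fun n : ℕ => (1/((n:ℝ)+1)) * c) atTop (𝓝[>] 0) := by
      apply tendsto_nhdsWithin_of_tendsto_nhds_of_eventually_within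
      · simpa using tendsto_one_div_add_atTop_nhds_zero_nat.mul_const c
      · filter_upwards with n
        exact Set.mem_Ioi.2 (mul_pos (by positivity) hc)
    have h2 : Tendsto (fun n : ℕ => D ((1/((n:ℝ)+1)) * c)) atTop atBot := hV'0.comp h1
    have h3 : Tendsto (fun n : ℕ => c * D ((1/((n:ℝ)+1)) * c) - c * Ψ ω) atTop atBot := by
      have := (h2.const_mul_atBot hc)
      simpa [sub_eq_add_neg] using tendsto_atBot_add_const_right atTop (-(c * Ψ ω)) this
    exact tendsto_atBot_mono (fun n => hbound _ (by positivity)) h3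
  -- the truncated sequence
  set H : ℕ → Ω → ℝ := fun n ω => max (F (1/((n:ℝ)+1)) ω) (-1) with hHdef
  have hHmeas : ∀ n, Measurable (H n) := fun n =>
    (hFmeas _ (by positivity)).max measurable_const
  have hF1int : Integrable (F 1) P := by
    have : F 1 = fun ω => (Vr (η ω) - η ω * Ψ ω) - V0 := by
      funext ω; rw [hFdef]; simp
    rw [this]
    exact hG1.sub (integrable_const V0)
  set bound : Ω → ℝ := fun ω => |F 1 ω| + 1 with hbdef
  have hbound_int : Integrable bound P := hF1int.abs.add (integrable_const 1)
  have h_bound : ∀ n, ∀ᵐ ω ∂P, ‖H n ω‖ ≤ bound ω := by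
    intro n
    filter_upwards with ω
    have h1 : F (1/((n:ℝ)+1)) ω ≤ F 1 ω := by
      apply hFmono ω _ _ (by positivity)
      rw [div_le_one (by positivity)]
      linarith [Nat.cast_nonneg (α := ℝ) n]
    rw [Real.norm_eq_abs, abs_le]
    constructor
    · have : (-1:ℝ) ≤ H n ω := le_max_right _ _
      have : (0:ℝ) ≤ |F 1 ω| := abs_nonneg _
      rw [hbdef]; simp only; linarith
    · have : H n ω ≤ max (F 1 ω) (-1) := max_le_max h1 le_rfl
      have h2 : max (F 1 ω) (-1) ≤ |F 1 ω| + 1 := by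
        apply max_le
        · linarith [le_abs_self (F 1 ω), abs_nonneg (F 1 ω)]
        · linarith [abs_nonneg (F 1 ω)]
      rw [hbdef]; simp only; linarith
  set L : Ω → ℝ := S.indicator (fun _ => (-1:ℝ)) with hLdef
  have h_lim : ∀ᵐ ω ∂P, Tendsto (fun n => H n ω) atTop (𝓝 (L ω)) := by
    filter_upwards with ω
    by_cases hω : ω ∈ S
    · have hLω : L ω = -1 := Set.indicator_of_mem hω _
      rw [hLω]
      have hev : ∀ᶠ n in atTop, H n ω = -1 := by
        filter_upwards [(hFdiv ω hω).eventually (eventually_le_atBot (-1))] with n hn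
        rw [hHdef]; simp only; exact max_eq_right hn
      exact Tendsto.congr' (hev.mono fun n hn => hn.symm) tendsto_const_nhds
    · have hη0 : η ω = 0 := le_antisymm (not_lt.1 hω) (hηpos ω)
      have hLω : L ω = 0 := Set.indicator_of_notMem hω _
      have hH : ∀ n, H n ω = 0 := by
        intro n
        rw [hHdef, hFdef]
        simp [hη0, hV0def]
      rw [hLω]
      simpa [hH] using (tendsto_const_nhds : Tendsto (fun _ : ℕ => (0:ℝ)) atTop (𝓝 0))
  have hDCT : Tendsto (fun n => ∫ ω, H n ω ∂P) atTop (𝓝 (∫ ω, L ω ∂P)) :=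
    tendsto_integral_of_dominated_convergence bound
      (fun n => (hHmeas n).aestronglyMeasurable) hbound_int h_bound h_lim
  have hLint : ∫ ω, L ω ∂P = (P S).toReal • (-1:ℝ) := by
    rw [hLdef]
    exact integral_indicator_const (-1:ℝ) hSmeas
  have hLneg : ∫ ω, L ω ∂P < 0 := by
    rw [hLint, smul_eq_mul]
    have hPS : 0 < (P S).toReal := ENNReal.toReal_pos hηne.ne' (measure_ne_top P S)
    nlinarith
  obtain ⟨n, hn⟩ := (hDCT.eventually_lt_const hLneg).exists
  set a : ℝ := 1/((n:ℝ)+1) with hadef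
  have ha : 0 < a := by positivity
  have ha1 : a ≤ 1 := by
    rw [hadef, div_le_one (by positivity)]
    linarith [Nat.cast_nonneg (α := ℝ) n]
  refine ⟨a, ⟨ha, ha1⟩, ?_⟩
  set g : Ω → ℝ := fun ω => Vr (a * η ω) - a * η ω * Ψ ω with hgdef
  have hgmeas : Measurable g := by
    have : g = fun ω => (F a ω) * a + V0 := by
      funext ω
      rw [hgdef, hFdef]
      simp only
      field_simp
      ring
    rw [this]
    exact ((hFmeas a ha).mul_const a).add measurable_const
  set h : Ω → ℝ := fun ω => V0 + a * H n ω with hhdef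
  have hHint : Integrable (H n) P := by
    refine hbound_int.mono ((hHmeas n).aestronglyMeasurable) ?_
    filter_upwards [h_bound n] with ω hω
    rw [Real.norm_eq_abs (bound ω), abs_of_nonneg (by positivity : (0:ℝ) ≤ bound ω)]
    exact hω
  have hhint : Integrable h P := (integrable_const V0).add (hHint.const_mul a)
  have hgle : ∀ ω, g ω ≤ h ω := by
    intro ω
    have h1 : g ω = V0 + a * F a ω := by
      rw [hgdef, hFdef]
      simp only
      field_simp
      ring
    rw [h1, hhdef]
    have hFH : F a ω ≤ H n ω := le_max_left _ _
    show V0 + a * F a ω ≤ V0 + a * H n ω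
    nlinarith
  have hhlt : ∫ ω, h ω ∂P < V0 := by
    rw [hhdef]
    simp only
    rw [integral_add (integrable_const V0) (hHint.const_mul a), integral_const,
      integral_const_mul]
    simp only [probReal_univ, one_smul]
    nlinarith
  set A : ENNReal := ∫⁻ ω, ENNReal.ofReal (g ω) ∂P with hAdef
  set B : ENNReal := ∫⁻ ω, ENNReal.ofReal (-(g ω)) ∂P with hBdef
  have hgoal_eq : (∫⁻ ω, ENNReal.ofReal (Vr (a * η ω) - a * η ω * Ψ ω) ∂P).toEReal
      - (∫⁻ ω, ENNReal.ofReal (-(Vr (a * η ω) - a * η ω * Ψ ω)) ∂P).toEReal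
      = A.toEReal - B.toEReal := rfl
  rw [hgoal_eq]
  have hA : A ≠ ⊤ := by
    have h1 : A ≤ ∫⁻ ω, (‖h ω‖₊ : ℝ≥0∞) ∂P := by
      rw [hAdef]
      apply lintegral_mono
      intro ω
      calc ENNReal.ofReal (g ω) ≤ ENNReal.ofReal (h ω) := ENNReal.ofReal_le_ofReal (hgle ω)
        _ ≤ (‖h ω‖₊ : ℝ≥0∞) := by
            rw [← enorm_eq_nnnorm, Real.enorm_eq_ofReal_abs]
            exact ENNReal.ofReal_le_ofReal (le_abs_self _)
    exact (h1.trans_lt hhint.2).ne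
  by_cases hB : B = ⊤
  · rw [hB]
    rw [EReal.coe_ennreal_top, sub_eq_add_neg, EReal.neg_top, EReal.add_bot]
    exact EReal.bot_lt_coe _
  · have habs : ∀ ω, (‖g ω‖₊ : ℝ≥0∞) = ENNReal.ofReal (g ω) + ENNReal.ofReal (-(g ω)) := by
      intro ω
      rw [← enorm_eq_nnnorm, Real.enorm_eq_ofReal_abs]
      rcases le_total 0 (g ω) with hx | hx
      · rw [abs_of_nonneg hx, ENNReal.ofReal_of_nonpos (neg_nonpos.mpr hx), add_zero]
      · rw [abs_of_nonpos hx, ENNReal.ofReal_of_nonpos hx, zero_add]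
    have hgint : Integrable g P := by
      refine ⟨hgmeas.aestronglyMeasurable, ?_⟩
      rw [HasFiniteIntegral]
      calc ∫⁻ ω, (‖g ω‖₊ : ℝ≥0∞) ∂P
          = ∫⁻ ω, (ENNReal.ofReal (g ω) + ENNReal.ofReal (-(g ω))) ∂P :=
            lintegral_congr fun ω => habs ω
        _ = A + B := lintegral_add_left (ENNReal.measurable_ofReal.comp hgmeas) _
        _ < ⊤ := by
            rw [ENNReal.add_lt_top]
            exact ⟨hA.lt_top, Ne.lt_top hB⟩
    have hint_eq : ∫ ω, g ω ∂P = A.toReal - B.toReal :=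
      integral_eq_lintegral_pos_part_sub_lintegral_neg_part hgint
    have hglt : ∫ ω, g ω ∂P < V0 := lt_of_le_of_lt (integral_mono hgint hhint hgle) hhlt
    have eA : A.toEReal = ((A.toReal : ℝ) : EReal) := by
      rw [← EReal.toReal_coe_ennreal (x := A)]
      exact (EReal.coe_toReal (by simpa using hA) (EReal.coe_ennreal_ne_bot A)).symm
    have eB : B.toEReal = ((B.toReal : ℝ) : EReal) := by
      rw [← EReal.toReal_coe_ennreal (x := B)]
      exact (EReal.coe_toReal (by simpa using hB) (EReal.coe_ennreal_ne_bot B)).symm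
    rw [eA, eB, ← EReal.coe_sub, EReal.coe_lt_coe_iff]
    linarith
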